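/- Let Q be a commutative Noetherian local ring, g = g_1,...,g_s a regular sequence in Q, and M a finitely generated Q-module admitting a free resolution (F, ∂) such that Im ∂_i ⊆ (g)F_{i-1} for every i (a g-weak complete intersection module). Then for every ℓ, the ℓ-th Koszul homology H_ℓ(g; M) is isomorphic as a Q/(g)-module to F_ℓ ⊗_Q Q/(g), where F is the minimal free resolution of M. -/

import Mathlib

set_option synthInstance.maxHeartbeats 1000000
set_option maxHeartbeats 1000000


open scoped TensorProduct

/-- The degree-`i` differential of the Koszul complex on the sequence `g` with
coefficients in `M`, modelled on functions on `i`-element subsets of `Fin s`. -/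
noncomputable def koszulD (Q : Type*) [CommRing Q] {s : ℕ} (g : Fin s → Q)
    (M : Type*) [AddCommGroup M] [Module Q M] (i : ℕ) :
    ({t : Finset (Fin s) // t.card = i + 1} → M) →ₗ[Q]
      ({t : Finset (Fin s) // t.card = i} → M) :=
  LinearMap.pi fun T => ∑ j : Fin s,
    if hj : j ∈ T.1 then 0
    else ((-1 : Q) ^ (T.1.filter (fun a => a < j)).card * g j) •
      LinearMap.proj (⟨insert j T.1, by
        rw [Finset.card_insert_of_notMem hj, T.2]⟩ :
          {t : Finset (Fin s) // t.card = i + 1})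

lemma koszulD_apply {Q : Type*} [CommRing Q] {s : ℕ} (g : Fin s → Q)
    {M : Type*} [AddCommGroup M] [Module Q M]
    (i : ℕ) (x : {t : Finset (Fin s) // t.card = i + 1} → M)
    (T : {t : Finset (Fin s) // t.card = i}) :
    koszulD Q g M i x T = ∑ j : Fin s,
      if hj : j ∈ T.1 then 0
      else ((-1 : Q) ^ (T.1.filter (fun a => a < j)).card * g j) •
        x ⟨insert j T.1, by rw [Finset.card_insert_of_notMem hj, T.2]⟩ := by
  simp only [koszulD, LinearMap.pi_apply, LinearMap.sum_apply]
  refine Finset.sum_congr rfl fun j _ => ?_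
  split
  · simp
  · simp [LinearMap.smul_apply, LinearMap.proj_apply]

section Kmapsec
variable {Q : Type*} [CommRing Q] {s : ℕ} (g : Fin s → Q)
  {M N : Type*} [AddCommGroup M] [Module Q M] [AddCommGroup N] [Module Q N]

/-- Post-composition with a linear map, on Koszul chains. -/
noncomputable def Kmap (f : M →ₗ[Q] N) (ι : Type*) : (ι → M) →ₗ[Q] (ι → N) where
  toFun x := fun T => f (x T)
  map_add' x y := by funext T; simp
  map_smul' c x := by funext T; simp

@[simp] lemma Kmap_apply (f : M →ₗ[Q] N) {ι : Type*} (x : ι → M) (T : ι) :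
    Kmap f ι x T = f (x T) := rfl

lemma koszulD_Kmap (f : M →ₗ[Q] N) (i : ℕ) (x : {t : Finset (Fin s) // t.card = i + 1} → M) :
    koszulD Q g N i (Kmap f _ x) = Kmap f _ (koszulD Q g M i x) := by
  funext T
  simp only [Kmap_apply, koszulD_apply, map_sum]
  refine Finset.sum_congr rfl fun j _ => ?_
  split
  · simp
  · simp
end Kmapsec

section Cone
variable {Q : Type*} [CommRing Q] {s : ℕ}
  {N : Type*} [AddCommGroup N] [Module Q N]

/-- Pull a finset of `Fin (s+1)` back along `castSucc`. -/
noncomputable def dnF (T : Finset (Fin (s + 1))) : Finset (Fin s) :=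
  T.preimage Fin.castSucc (Fin.castSucc_injective s).injOn

lemma mem_dnF {T : Finset (Fin (s + 1))} {j : Fin s} : j ∈ dnF T ↔ j.castSucc ∈ T :=
  Finset.mem_preimage

lemma last_not_mem_map (t : Finset (Fin s)) :
    Fin.last s ∉ t.map Fin.castSuccEmb := by
  intro hmem
  obtain ⟨j, _, hj⟩ := Finset.mem_map.mp hmem
  exact (Fin.castSucc_lt_last j).ne hj

lemma dnF_map (t : Finset (Fin s)) : dnF (t.map Fin.castSuccEmb) = t := by
  ext j; simp [mem_dnF, Finset.mem_map, Fin.castSuccEmb]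
  constructor
  · rintro ⟨a, ha, h⟩; exact (Fin.castSucc_injective s h) ▸ ha
  · intro h; exact ⟨j, h, rfl⟩

lemma map_dnF {T : Finset (Fin (s + 1))} (h : Fin.last s ∉ T) :
    (dnF T).map Fin.castSuccEmb = T := by
  ext x
  simp only [Finset.mem_map, Fin.castSuccEmb, Function.Embedding.coeFn_mk, mem_dnF]
  constructor
  · rintro ⟨a, ha, rfl⟩; exact ha
  · intro hx
    have hne : x ≠ Fin.last s := fun he => h (he ▸ hx)
    obtain ⟨y, rfl⟩ := Fin.exists_castSucc_eq.mpr hne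
    exact ⟨y, hx, rfl⟩

lemma dnF_insert_last (T : Finset (Fin (s + 1))) :
    dnF (insert (Fin.last s) T) = dnF T := by
  ext j
  simp [mem_dnF, Finset.mem_insert, (Fin.castSucc_lt_last j).ne]

lemma card_dnF_of_not_mem {T : Finset (Fin (s + 1))} (h : Fin.last s ∉ T) :
    (dnF T).card = T.card := by
  conv_rhs => rw [← map_dnF h]
  rw [Finset.card_map]

lemma map_dnF_of_mem {T : Finset (Fin (s + 1))} (h : Fin.last s ∈ T) :
    (dnF T).map Fin.castSuccEmb = T.erase (Fin.last s) := by
  have h1 : dnF T = dnF (T.erase (Fin.last s)) := by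
    ext j
    simp [mem_dnF, Finset.mem_erase, (Fin.castSucc_lt_last j).ne]
  rw [h1, map_dnF (by simp)]

lemma card_dnF_of_mem {T : Finset (Fin (s + 1))} (h : Fin.last s ∈ T) :
    (dnF T).card + 1 = T.card := by
  have := congrArg Finset.card (map_dnF_of_mem h)
  rw [Finset.card_map, Finset.card_erase_of_mem h] at this
  have hpos : 0 < T.card := Finset.card_pos.mpr ⟨_, h⟩
  omega


variable (N) in
/-- Component on subsets avoiding `last`. -/
def Am (i : ℕ) (c : {t : Finset (Fin (s + 1)) // t.card = i} → N)
    (t : {t : Finset (Fin s) // t.card = i}) : N :=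
  c ⟨t.1.map Fin.castSuccEmb, by rw [Finset.card_map, t.2]⟩

variable (N) in
/-- Component on subsets containing `last`. -/
def Bm (i : ℕ) (c : {t : Finset (Fin (s + 1)) // t.card = i + 1} → N)
    (t : {t : Finset (Fin s) // t.card = i}) : N :=
  c ⟨insert (Fin.last s) (t.1.map Fin.castSuccEmb), by
    rw [Finset.card_insert_of_notMem (last_not_mem_map t.1), Finset.card_map, t.2]⟩

variable (N) in
/-- Reconstruct a chain from its two components. -/
noncomputable def Em (i : ℕ) (a : {t : Finset (Fin s) // t.card = i + 1} → N)
    (b : {t : Finset (Fin s) // t.card = i} → N)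
    (T : {t : Finset (Fin (s + 1)) // t.card = i + 1}) : N :=
  if h : Fin.last s ∈ T.1 then
    b ⟨dnF T.1, by have := card_dnF_of_mem h; omega⟩
  else
    a ⟨dnF T.1, by rw [card_dnF_of_not_mem h, T.2]⟩

lemma Am_Em (i : ℕ) (a : {t : Finset (Fin s) // t.card = i + 1} → N)
    (b : {t : Finset (Fin s) // t.card = i} → N) :
    Am N (i + 1) (Em N i a b) = a := by
  funext t
  have hl := last_not_mem_map t.1
  simp only [Am, Em, dif_neg hl]
  exact congrArg a (Subtype.ext (dnF_map t.1))

lemma Bm_Em (i : ℕ) (a : {t : Finset (Fin s) // t.card = i + 1} → N)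
    (b : {t : Finset (Fin s) // t.card = i} → N) :
    Bm N i (Em N i a b) = b := by
  funext t
  simp only [Bm, Em, dif_pos (Finset.mem_insert_self _ _)]
  have h : dnF (insert (Fin.last s) (t.1.map Fin.castSuccEmb)) = t.1 := by
    rw [dnF_insert_last, dnF_map]
  exact congrArg b (Subtype.ext h)

lemma ext_AB {i : ℕ} {c c' : {t : Finset (Fin (s + 1)) // t.card = i + 1} → N}
    (hA : Am N (i + 1) c = Am N (i + 1) c') (hB : Bm N i c = Bm N i c') : c = c' := by
  funext T
  by_cases h : Fin.last s ∈ T.1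
  · have hc : (dnF T.1).card = i := by have := card_dnF_of_mem h; omega
    have hT : insert (Fin.last s) ((dnF T.1).map Fin.castSuccEmb) = T.1 := by
      rw [map_dnF_of_mem h, Finset.insert_erase h]
    have e1 : (⟨insert (Fin.last s) ((dnF T.1).map Fin.castSuccEmb),
        by rw [hT]; exact T.2⟩ : {t : Finset (Fin (s + 1)) // t.card = i + 1}) = T :=
      Subtype.ext hT
    have := congrFun hB ⟨dnF T.1, hc⟩
    simp only [Bm] at this
    rw [← e1]
    exact this
  · have hc : (dnF T.1).card = i + 1 := by rw [card_dnF_of_not_mem h, T.2]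
    have hT : (dnF T.1).map Fin.castSuccEmb = T.1 := map_dnF h
    have e1 : (⟨(dnF T.1).map Fin.castSuccEmb,
        by rw [hT]; exact T.2⟩ : {t : Finset (Fin (s + 1)) // t.card = i + 1}) = T :=
      Subtype.ext hT
    have := congrFun hA ⟨dnF T.1, hc⟩
    simp only [Am] at this
    rw [← e1]
    exact this

lemma ext_A0 {c c' : {t : Finset (Fin (s + 1)) // t.card = 0} → N}
    (hA : Am N 0 c = Am N 0 c') : c = c' := by
  funext T
  have h : Fin.last s ∉ T.1 := by
    rw [Finset.card_eq_zero.mp T.2]; exact Finset.notMem_empty _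
  have hc : (dnF T.1).card = 0 := by rw [card_dnF_of_not_mem h, T.2]
  have hT : (dnF T.1).map Fin.castSuccEmb = T.1 := map_dnF h
  have e1 : (⟨(dnF T.1).map Fin.castSuccEmb,
      by rw [hT]; exact T.2⟩ : {t : Finset (Fin (s + 1)) // t.card = 0}) = T :=
    Subtype.ext hT
  have := congrFun hA ⟨dnF T.1, hc⟩
  simp only [Am] at this
  rw [← e1]
  exact this


lemma filter_map_card (t : Finset (Fin s)) (j : Fin s) :
    ((t.map Fin.castSuccEmb).filter (fun a => a < j.castSucc)).card
      = (t.filter (fun a => a < j)).card := by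
  rw [Finset.filter_map, Finset.card_map]
  refine congrArg Finset.card (Finset.filter_congr ?_)
  intro a _
  show (Fin.castSuccEmb a < j.castSucc) ↔ a < j
  rw [Fin.lt_def, Fin.lt_def]
  exact Iff.rfl

lemma filter_last_card (t : Finset (Fin s)) :
    ((t.map Fin.castSuccEmb).filter (fun a => a < Fin.last s)).card = t.card := by
  have h : ∀ a ∈ t.map Fin.castSuccEmb, a < Fin.last s := by
    intro a ha
    obtain ⟨b, _, rfl⟩ := Finset.mem_map.mp ha
    exact Fin.castSucc_lt_last b
  rw [Finset.filter_true_of_mem h, Finset.card_map]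

lemma insert_map_comm (t : Finset (Fin s)) (j : Fin s) :
    insert j.castSucc (t.map Fin.castSuccEmb) = (insert j t).map Fin.castSuccEmb :=
  (Finset.map_insert _ _ _).symm

lemma mem_map_castSucc {t : Finset (Fin s)} {j : Fin s} :
    j.castSucc ∈ t.map Fin.castSuccEmb ↔ j ∈ t :=
  Finset.mem_map' _

lemma mem_insert_last {t : Finset (Fin s)} {j : Fin s} :
    j.castSucc ∈ insert (Fin.last s) (t.map Fin.castSuccEmb) ↔ j ∈ t := by
  rw [Finset.mem_insert, mem_map_castSucc]
  simp [(Fin.castSucc_lt_last j).ne]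

lemma filter_insert_last_card (t : Finset (Fin s)) (j : Fin s) :
    ((insert (Fin.last s) (t.map Fin.castSuccEmb)).filter (fun a => a < j.castSucc)).card
      = (t.filter (fun a => a < j)).card := by
  rw [Finset.filter_insert, if_neg (not_lt.mpr (Fin.castSucc_lt_last j).le),
    filter_map_card]

variable {Q : Type*} [CommRing Q] [Module Q N]

lemma koszulD_A (g : Fin (s + 1) → Q) (i : ℕ)
    (c : {t : Finset (Fin (s + 1)) // t.card = i + 1} → N)
    (t : {t : Finset (Fin s) // t.card = i}) :
    Am N i (koszulD Q g N i c) t =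
      koszulD Q (fun j => g j.castSucc) N i (Am N (i + 1) c) t
        + ((-1 : Q) ^ i * g (Fin.last s)) • Bm N i c t := by
  show koszulD Q g N i c ⟨t.1.map Fin.castSuccEmb, _⟩ = _
  rw [koszulD_apply, koszulD_apply, Fin.sum_univ_castSucc]
  congr 1
  · refine Finset.sum_congr rfl fun j _ => ?_
    by_cases hj : j ∈ t.1
    · rw [dif_pos (mem_map_castSucc.mpr hj), dif_pos hj]
    · rw [dif_neg (fun h => hj (mem_map_castSucc.mp h)), dif_neg hj]
      rw [filter_map_card]
      exact congrArg _ (congrArg c (Subtype.ext (insert_map_comm t.1 j)))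
  · rw [dif_neg (last_not_mem_map t.1)]
    rw [filter_last_card, t.2]
    rfl

lemma koszulD_B (g : Fin (s + 1) → Q) (i : ℕ)
    (c : {t : Finset (Fin (s + 1)) // t.card = i + 1 + 1} → N)
    (t : {t : Finset (Fin s) // t.card = i}) :
    Bm N i (koszulD Q g N (i + 1) c) t =
      koszulD Q (fun j => g j.castSucc) N i (Bm N (i + 1) c) t := by
  show koszulD Q g N (i + 1) c ⟨insert (Fin.last s) (t.1.map Fin.castSuccEmb), _⟩ = _
  rw [koszulD_apply, koszulD_apply, Fin.sum_univ_castSucc]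
  rw [dif_pos (Finset.mem_insert_self _ _), add_zero]
  refine Finset.sum_congr rfl fun j _ => ?_
  by_cases hj : j ∈ t.1
  · rw [dif_pos (mem_insert_last.mpr hj), dif_pos hj]
  · rw [dif_neg (fun h => hj (mem_insert_last.mp h)), dif_neg hj]
    rw [filter_insert_last_card]
    refine congrArg _ (congrArg c (Subtype.ext ?_))
    show insert j.castSucc (insert (Fin.last s) (t.1.map Fin.castSuccEmb))
      = insert (Fin.last s) ((insert j t.1).map Fin.castSuccEmb)
    rw [Finset.insert_comm, insert_map_comm]


lemma Am_zero (i : ℕ) : Am N i (0 : {t : Finset (Fin (s + 1)) // t.card = i} → N) = 0 := rfl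

lemma Bm_zero (i : ℕ) : Bm N i (0 : {t : Finset (Fin (s + 1)) // t.card = i + 1} → N) = 0 := rfl

lemma koszulD_A_fun (g : Fin (s + 1) → Q) (i : ℕ)
    (c : {t : Finset (Fin (s + 1)) // t.card = i + 1} → N) :
    Am N i (koszulD Q g N i c) =
      koszulD Q (fun j => g j.castSucc) N i (Am N (i + 1) c)
        + ((-1 : Q) ^ i * g (Fin.last s)) • Bm N i c :=
  funext fun t => koszulD_A g i c t

lemma koszulD_B_fun (g : Fin (s + 1) → Q) (i : ℕ)
    (c : {t : Finset (Fin (s + 1)) // t.card = i + 1 + 1} → N) :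
    Bm N i (koszulD Q g N (i + 1) c) =
      koszulD Q (fun j => g j.castSucc) N i (Bm N (i + 1) c) :=
  funext fun t => koszulD_B g i c t

end Cone

lemma koszulD_koszulD {Q : Type*} [CommRing Q] {N : Type*} [AddCommGroup N] [Module Q N] :
    ∀ {s : ℕ} (g : Fin s → Q) (i : ℕ) (c : {t : Finset (Fin s) // t.card = i + 2} → N),
      koszulD Q g N i (koszulD Q g N (i + 1) c) = 0 := by
  intro s
  induction s with
  | zero =>
    intro g i c
    funext T
    rw [koszulD_apply]
    simp
  | succ s IH =>
    intro g i c
    have hA : Am N i (koszulD Q g N i (koszulD Q g N (i + 1) c)) = 0 := by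
      rw [koszulD_A_fun g i (koszulD Q g N (i + 1) c),
        koszulD_A_fun g (i + 1) c, koszulD_B_fun g i c, map_add, LinearMap.map_smul,
        IH (fun j => g j.castSucc) i (Am N (i + 2) c)]
      have : ((-1 : Q) ^ (i + 1) * g (Fin.last s)) +
          ((-1 : Q) ^ i * g (Fin.last s)) = 0 := by ring
      calc (0 : {t : Finset (Fin s) // t.card = i} → N)
            + ((-1 : Q) ^ (i + 1) * g (Fin.last s)) •
                koszulD Q (fun j => g j.castSucc) N i (Bm N (i + 1) c)
            + ((-1 : Q) ^ i * g (Fin.last s)) •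
                koszulD Q (fun j => g j.castSucc) N i (Bm N (i + 1) c)
          = (((-1 : Q) ^ (i + 1) * g (Fin.last s)) + ((-1 : Q) ^ i * g (Fin.last s))) •
                koszulD Q (fun j => g j.castSucc) N i (Bm N (i + 1) c) := by
            rw [zero_add, ← add_smul]
        _ = 0 := by rw [this, zero_smul]
    cases i with
    | zero => exact ext_A0 (by rw [hA, Am_zero])
    | succ j =>
      refine ext_AB (by rw [hA, Am_zero]) ?_
      rw [Bm_zero]
      rw [koszulD_B_fun g j (koszulD Q g N (j + 2) c), koszulD_B_fun g (j + 1) c]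
      exact IH (fun k => g k.castSucc) j (Bm N (j + 2) c)
section SpanSmul
variable {Q : Type*} [CommRing Q] {s : ℕ} (g : Fin s → Q)
  {N : Type*} [AddCommGroup N] [Module Q N]

lemma mem_span_smul_top_iff {x : N} {ι : Type*} [Fintype ι] (f : ι → Q) :
    x ∈ (Ideal.span (Set.range f)) • (⊤ : Submodule Q N) ↔
      ∃ m : ι → N, x = ∑ j, f j • m j := by
  constructor
  · intro hx
    refine Submodule.smul_induction_on hx ?_ ?_
    · intro r hr n _
      obtain ⟨c, hc⟩ := (Finsupp.mem_span_range_iff_exists_finsupp).1 hr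
      refine ⟨fun j => c j • n, ?_⟩
      rw [← hc]
      rw [Finsupp.sum_fintype]
      · rw [Finset.sum_smul]
        refine Finset.sum_congr rfl fun j _ => ?_
        rw [smul_eq_mul, mul_comm, ← smul_smul]
      · intro j; simp
    · rintro x y ⟨mx, hmx⟩ ⟨my, hmy⟩
      exact ⟨fun j => mx j + my j, by simp [hmx, hmy, Finset.sum_add_distrib, smul_add]⟩
  · rintro ⟨m, rfl⟩
    exact Submodule.sum_mem _ fun j _ =>
      Submodule.smul_mem_smul (Ideal.subset_span ⟨j, rfl⟩) trivial
end SpanSmul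

section Reg
variable {Q : Type*} [CommRing Q] {N : Type*} [AddCommGroup N] [Module Q N]

variable (N) in
/-- Weak regularity of a finite sequence on `N`, unpacked. -/
def WRseq {s : ℕ} (g : Fin s → Q) : Prop :=
  ∀ (i : Fin s) (y : N), g i • y ∈ Ideal.span (g '' {j | j < i}) • (⊤ : Submodule Q N) →
    y ∈ Ideal.span (g '' {j | j < i}) • (⊤ : Submodule Q N)

lemma image_lt_castSucc {s : ℕ} (g : Fin (s + 1) → Q) (i : Fin s) :
    (fun j : Fin s => g j.castSucc) '' {j | j < i} = g '' {j | j < i.castSucc} := by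
  ext q
  constructor
  · rintro ⟨j, hj, rfl⟩
    exact ⟨j.castSucc, Fin.castSucc_lt_castSucc_iff.mpr hj, rfl⟩
  · rintro ⟨j, hj, rfl⟩
    have hne : j ≠ Fin.last s := ne_of_lt (lt_trans hj (Fin.castSucc_lt_last i))
    obtain ⟨j₀, rfl⟩ := Fin.exists_castSucc_eq.mpr hne
    exact ⟨j₀, Fin.castSucc_lt_castSucc_iff.mp hj, rfl⟩

lemma range_castSucc_image {s : ℕ} (g : Fin (s + 1) → Q) :
    Set.range (fun j : Fin s => g j.castSucc) = g '' {j | j < Fin.last s} := by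
  ext q
  constructor
  · rintro ⟨j, rfl⟩
    exact ⟨j.castSucc, Fin.castSucc_lt_last j, rfl⟩
  · rintro ⟨j, hj, rfl⟩
    obtain ⟨j₀, rfl⟩ := Fin.exists_castSucc_eq.mpr (ne_of_lt hj)
    exact ⟨j₀, rfl⟩

lemma WRseq_castSucc {s : ℕ} {g : Fin (s + 1) → Q} (h : WRseq N g) :
    WRseq N (fun j : Fin s => g j.castSucc) := by
  intro i y hy
  rw [image_lt_castSucc] at hy ⊢
  exact h i.castSucc y hy

noncomputable def singElem {s : ℕ} (t : {t : Finset (Fin s) // t.card = 1}) : Fin s :=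
  (Finset.card_eq_one.mp t.2).choose

lemma singElem_spec {s : ℕ} (t : {t : Finset (Fin s) // t.card = 1}) :
    t.1 = {singElem t} := (Finset.card_eq_one.mp t.2).choose_spec

lemma singElem_eq {s : ℕ} (t : {t : Finset (Fin s) // t.card = 1}) {j : Fin s}
    (h : t.1 = {j}) : singElem t = j := by
  have := singElem_spec t
  rw [h] at this
  exact Finset.singleton_inj.mp this.symm

/-- Degree-0 surjectivity onto `(g)N`. -/
lemma koszulD_zero_range {s : ℕ} (g : Fin s → Q)
    (w : {t : Finset (Fin s) // t.card = 0} → N)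
    (hw : ∀ T, w T ∈ Ideal.span (Set.range g) • (⊤ : Submodule Q N)) :
    ∃ u, koszulD Q g N 0 u = w := by
  obtain ⟨m, hm⟩ := (mem_span_smul_top_iff g).mp (hw ⟨∅, Finset.card_empty⟩)
  refine ⟨fun t => m (singElem t), ?_⟩
  funext T
  have h0 : T.1 = ∅ := Finset.card_eq_zero.mp T.2
  have hT : T = ⟨∅, Finset.card_empty⟩ := Subtype.ext h0
  rw [koszulD_apply, hT, hm]
  refine Finset.sum_congr rfl fun j _ => ?_
  rw [dif_neg (Finset.notMem_empty j)]
  have hfil : ((∅ : Finset (Fin s)).filter (fun a => a < j)).card = 0 := by simp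
  rw [hfil, pow_zero, one_mul]
  refine congrArg (fun z => g j • m z) (singElem_eq _ ?_)
  show insert j (∅ : Finset (Fin s)) = {j}
  simp

/-- Degree-0 values of boundaries lie in `(g)N`. -/
lemma koszulD_zero_mem {s : ℕ} (g : Fin s → Q)
    (u : {t : Finset (Fin s) // t.card = 1} → N) (T : {t : Finset (Fin s) // t.card = 0}) :
    koszulD Q g N 0 u T ∈ Ideal.span (Set.range g) • (⊤ : Submodule Q N) := by
  rw [koszulD_apply]
  refine Submodule.sum_mem _ fun j _ => ?_
  split
  · exact Submodule.zero_mem _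
  · rw [mul_smul]
    exact Submodule.smul_mem _ _
      (Submodule.smul_mem_smul (Ideal.subset_span (Set.mem_range_self j)) Submodule.mem_top)
end Reg

lemma koszul_acyclic {Q : Type*} [CommRing Q] {N : Type*} [AddCommGroup N] [Module Q N] :
    ∀ {s : ℕ} (g : Fin s → Q), WRseq N g → ∀ (i : ℕ)
      (c : {t : Finset (Fin s) // t.card = i + 1} → N),
      koszulD Q g N i c = 0 → ∃ u, koszulD Q g N (i + 1) u = c := by
  intro s
  induction s with
  | zero =>
    intro g _ i c _
    refine ⟨0, ?_⟩
    funext T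
    exfalso
    have h := T.2
    have h2 : T.1.card ≤ 0 := by
      have := Finset.card_le_card (Finset.subset_univ T.1)
      simpa using this
    omega
  | succ s IH =>
    intro g hr i c hc
    have hr' : WRseq N (fun j : Fin s => g j.castSucc) := WRseq_castSucc hr
    have hBrange : ∃ b₁, koszulD Q (fun j : Fin s => g j.castSucc) N i b₁ = Bm N i c := by
      cases i with
      | zero =>
        refine koszulD_zero_range _ (Bm N 0 c) ?_
        intro T
        have hI : Ideal.span (Set.range (fun j : Fin s => g j.castSucc))
            = Ideal.span (g '' {j | j < Fin.last s}) := by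
          rw [range_castSucc_image]
        have hla := koszulD_A g 0 c T
        rw [hc] at hla
        simp only [Am_zero, Pi.zero_apply, pow_zero, one_mul] at hla
        have h1 : g (Fin.last s) • Bm N 0 c T
            = - koszulD Q (fun j : Fin s => g j.castSucc) N 0 (Am N 1 c) T :=
          eq_neg_of_add_eq_zero_right hla.symm
        have h2 : g (Fin.last s) • Bm N 0 c T
            ∈ Ideal.span (g '' {j | j < Fin.last s}) • (⊤ : Submodule Q N) := by
          rw [h1, ← hI]
          exact Submodule.neg_mem _ (koszulD_zero_mem _ (Am N 1 c) T)
        rw [hI]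
        exact hr (Fin.last s) _ h2
      | succ j =>
        apply IH _ hr' j (Bm N (j + 1) c)
        have hlb := koszulD_B_fun g j c
        rw [hc, Bm_zero] at hlb
        exact hlb.symm
    obtain ⟨b₁, hb₁⟩ := hBrange
    have hacyc : koszulD Q (fun j : Fin s => g j.castSucc) N i
        (Am N (i + 1) c + ((-1 : Q) ^ i * g (Fin.last s)) • b₁) = 0 := by
      rw [map_add, LinearMap.map_smul, hb₁]
      have hla := koszulD_A_fun g i c
      rw [hc, Am_zero] at hla
      have h3 : koszulD Q (fun j : Fin s => g j.castSucc) N i (Am N (i + 1) c)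
          = -(((-1 : Q) ^ i * g (Fin.last s)) • Bm N i c) :=
        eq_neg_of_add_eq_zero_left hla.symm
      rw [h3]
      exact neg_add_cancel _
    obtain ⟨a₁, ha₁⟩ := IH _ hr' i
      (Am N (i + 1) c + ((-1 : Q) ^ i * g (Fin.last s)) • b₁) hacyc
    refine ⟨Em N (i + 1) a₁ b₁, ext_AB ?_ ?_⟩
    · rw [koszulD_A_fun g (i + 1) (Em N (i + 1) a₁ b₁), Am_Em, Bm_Em, ha₁]
      have hco : ((-1 : Q) ^ i * g (Fin.last s)) + ((-1 : Q) ^ (i + 1) * g (Fin.last s)) = 0 := by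
        ring
      rw [add_assoc, ← add_smul, hco, zero_smul, add_zero]
    · rw [koszulD_B_fun g i (Em N (i + 1) a₁ b₁), Bm_Em, hb₁]

section RegTransfer
variable {Q : Type*} [CommRing Q]

lemma mem_smul_top_pi {I : Ideal Q} {n : ℕ} {y : Fin n → Q} :
    y ∈ I • (⊤ : Submodule Q (Fin n → Q)) ↔ ∀ k, y k ∈ I := by
  constructor
  · intro hy
    refine Submodule.smul_induction_on hy ?_ ?_
    · intro r hr m _ k
      exact Ideal.mul_mem_right _ _ hr
    · intro a b ha hb k
      exact Ideal.add_mem _ (ha k) (hb k)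
  · intro hy
    have : y = ∑ k, Pi.single k (y k) := (Finset.univ_sum_single y).symm
    rw [this]
    refine Submodule.sum_mem _ fun k _ => ?_
    have h1 : Pi.single k (y k) = y k • (Pi.single k 1 : Fin n → Q) := by
      funext j
      by_cases h : j = k
      · subst h; simp
      · simp [Pi.single_eq_of_ne h]
    rw [h1]
    exact Submodule.smul_mem_smul (hy k) Submodule.mem_top

lemma ofList_take_eq_span {s : ℕ} (g : Fin s → Q) (i : Fin s) :
    Ideal.ofList ((List.ofFn g).take i.1) = Ideal.span (g '' {j | j < i}) := by
  unfold Ideal.ofList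
  congr 1
  ext r
  simp only [Set.mem_setOf_eq, List.mem_take_iff_getElem, Set.mem_image]
  constructor
  · rintro ⟨k, hk, rfl⟩
    rw [List.length_ofFn] at hk
    have hks : k < s := lt_of_lt_of_le (lt_of_lt_of_le hk (min_le_right _ _)) le_rfl
    refine ⟨⟨k, hks⟩, ?_, by simp [List.getElem_ofFn]⟩
    have : k < i.1 := lt_of_lt_of_le hk (min_le_left _ _)
    exact this
  · rintro ⟨j, hj, rfl⟩
    refine ⟨j.1, ?_, by simp [List.getElem_ofFn]⟩
    rw [List.length_ofFn]
    exact lt_min hj j.isLt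

lemma wrseq_of_isWeaklyRegular {s : ℕ} {g : Fin s → Q}
    (h : RingTheory.Sequence.IsWeaklyRegular Q (List.ofFn g)) :
    WRseq Q g := by
  intro i y hy
  have hi : i.1 < (List.ofFn g).length := by rw [List.length_ofFn]; exact i.isLt
  have hreg := h.regular_mod_prev i.1 hi
  have hg : (List.ofFn g)[i.1] = g i := by simp [List.getElem_ofFn]
  rw [hg, ofList_take_eq_span] at hreg
  by_contra hne
  have hmk : (Submodule.Quotient.mk y :
      Q ⧸ (Ideal.span (g '' {j | j < i}) • ⊤ : Submodule Q Q)) ≠ 0 := by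
    simp only [ne_eq, Submodule.Quotient.mk_eq_zero]
    exact hne
  apply hmk
  have : g i • (Submodule.Quotient.mk y :
      Q ⧸ (Ideal.span (g '' {j | j < i}) • ⊤ : Submodule Q Q)) = 0 := by
    rw [← Submodule.Quotient.mk_smul, Submodule.Quotient.mk_eq_zero]
    exact hy
  have h0 : g i • (0 : Q ⧸ (Ideal.span (g '' {j | j < i}) • ⊤ : Submodule Q Q)) = 0 :=
    smul_zero _
  exact hreg (this.trans h0.symm)

lemma ideal_smul_top_self {I : Ideal Q} : I • (⊤ : Submodule Q Q) = I := by
  rw [smul_eq_mul, Ideal.mul_top]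

lemma wrseq_pi {s n : ℕ} {g : Fin s → Q} (h : WRseq Q g) : WRseq (Fin n → Q) g := by
  intro i y hy
  rw [mem_smul_top_pi] at hy ⊢
  intro k
  have hk : g i • y k ∈ Ideal.span (g '' {j | j < i}) • (⊤ : Submodule Q Q) := by
    rw [ideal_smul_top_self]
    exact hy k
  have := h i (y k) hk
  rw [ideal_smul_top_self] at this
  exact this
end RegTransfer

/-- Koszul cycles in homological degree `ℓ`. -/
noncomputable def koszulCycles (Q : Type*) [CommRing Q] {s : ℕ} (g : Fin s → Q)
    (M : Type*) [AddCommGroup M] [Module Q M] :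
    (ℓ : ℕ) → Submodule Q ({t : Finset (Fin s) // t.card = ℓ} → M)
  | 0 => ⊤
  | (n + 1) => LinearMap.ker (koszulD Q g M n)

/-- The Koszul homology `H_ℓ(g; M)`: cycles modulo boundaries. -/
noncomputable abbrev KoszulHomology (Q : Type*) [CommRing Q] {s : ℕ} (g : Fin s → Q)
    (M : Type*) [AddCommGroup M] [Module Q M] (ℓ : ℕ) :=
  (koszulCycles Q g M ℓ) ⧸
    ((LinearMap.range (koszulD Q g M ℓ)).comap (koszulCycles Q g M ℓ).subtype)

lemma Kmap_injective {Q : Type*} [CommRing Q] {M N : Type*} [AddCommGroup M] [Module Q M]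
    [AddCommGroup N] [Module Q N] {f : M →ₗ[Q] N} (hf : Function.Injective f) (ι : Type*)
    (a b : ι → M) (h : Kmap f ι a = Kmap f ι b) : a = b := by
  funext T
  exact hf (congrFun h T)

section Shift
variable {Q : Type*} [CommRing Q] {s : ℕ} {g : Fin s → Q}
  {F M : Type*} [AddCommGroup F] [Module Q F] [AddCommGroup M] [Module Q M]

theorem shift_iso (π : F →ₗ[Q] M) (hπ : Function.Surjective π)
    (hA : (LinearMap.ker π : Submodule Q F) ≤ Ideal.span (Set.range g) • ⊤)
    (hrF : WRseq F g) (ℓ : ℕ) :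
    Nonempty ((KoszulHomology Q g M (ℓ + 1)) ≃ₗ[Q]
      KoszulHomology Q g ↥(LinearMap.ker π) ℓ) := by
  classical
  -- abbreviations
  have hexz : ∀ z : ↥(koszulCycles Q g ↥(LinearMap.ker π) ℓ),
      ∃ u, koszulD Q g F ℓ u = Kmap (LinearMap.ker π).subtype _ z.1 := by
    intro z
    cases ℓ with
    | zero =>
      apply koszulD_zero_range
      intro T
      exact hA (z.1 T).2
    | succ n =>
      apply koszul_acyclic g hrF n
      have hz : koszulD Q g ↥(LinearMap.ker π) n z.1 = 0 := LinearMap.mem_ker.mp z.2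
      rw [koszulD_Kmap, hz, map_zero]
  have hcyc : ∀ (z : ↥(koszulCycles Q g ↥(LinearMap.ker π) ℓ)) (u),
      koszulD Q g F ℓ u = Kmap (LinearMap.ker π).subtype _ z.1 →
      Kmap π _ u ∈ koszulCycles Q g M (ℓ + 1) := by
    intro z u hu
    refine LinearMap.mem_ker.mpr ?_
    rw [koszulD_Kmap, hu]
    funext T
    exact (z.1 T).2
  -- the underlying function of the map Z_ℓ(A) → H_{ℓ+1}(M)
  let Φ₀ : ↥(koszulCycles Q g ↥(LinearMap.ker π) ℓ) → KoszulHomology Q g M (ℓ + 1) :=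
    fun z => Submodule.Quotient.mk
      ⟨Kmap π _ (hexz z).choose, hcyc z _ (hexz z).choose_spec⟩
  -- well-definedness
  have key : ∀ (z) (u) (hu : koszulD Q g F ℓ u = Kmap (LinearMap.ker π).subtype _ z.1)
      (hm : Kmap π _ u ∈ koszulCycles Q g M (ℓ + 1)),
      Submodule.Quotient.mk ⟨Kmap π _ u, hm⟩ = Φ₀ z := by
    intro z u hu hm
    rw [Submodule.Quotient.eq]
    obtain ⟨v, hv⟩ := koszul_acyclic g hrF ℓ (u - (hexz z).choose)
      (by rw [map_sub, hu, (hexz z).choose_spec, sub_self])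
    refine Submodule.mem_comap.mpr ⟨Kmap π _ v, ?_⟩
    rw [koszulD_Kmap, hv, map_sub]
    rfl
  -- linearity
  let Φ : ↥(koszulCycles Q g ↥(LinearMap.ker π) ℓ) →ₗ[Q] KoszulHomology Q g M (ℓ + 1) :=
    { toFun := Φ₀
      map_add' := by
        intro z z'
        show Φ₀ (z + z') = Φ₀ z + Φ₀ z'
        have hu : koszulD Q g F ℓ ((hexz z).choose + (hexz z').choose)
            = Kmap (LinearMap.ker π).subtype _ ((z + z').1) := by
          rw [map_add, (hexz z).choose_spec, (hexz z').choose_spec, ← map_add]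
          rfl
        have h2 := key (z + z') _ hu (hcyc _ _ hu)
        rw [← h2]
        have h3 : (⟨Kmap π _ ((hexz z).choose + (hexz z').choose), hcyc _ _ hu⟩ :
            ↥(koszulCycles Q g M (ℓ + 1)))
            = ⟨Kmap π _ (hexz z).choose, hcyc z _ (hexz z).choose_spec⟩
              + ⟨Kmap π _ (hexz z').choose, hcyc z' _ (hexz z').choose_spec⟩ :=
          Subtype.ext (map_add _ _ _)
        rw [h3, Submodule.Quotient.mk_add]
      map_smul' := by
        intro q z
        show Φ₀ (q • z) = q • Φ₀ z
        have hu : koszulD Q g F ℓ (q • (hexz z).choose)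
            = Kmap (LinearMap.ker π).subtype _ ((q • z).1) := by
          rw [map_smul, (hexz z).choose_spec, ← map_smul]
          rfl
        have h2 := key (q • z) _ hu (hcyc _ _ hu)
        rw [← h2]
        have h3 : (⟨Kmap π _ (q • (hexz z).choose), hcyc _ _ hu⟩ :
            ↥(koszulCycles Q g M (ℓ + 1)))
            = q • ⟨Kmap π _ (hexz z).choose, hcyc z _ (hexz z).choose_spec⟩ :=
          Subtype.ext (map_smul _ _ _)
        rw [h3, Submodule.Quotient.mk_smul] }
  -- surjectivity
  have hsurj : Function.Surjective Φ := by
    intro h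
    obtain ⟨c, rfl⟩ := Submodule.Quotient.mk_surjective _ h
    let u : {t : Finset (Fin s) // t.card = ℓ + 1} → F := fun T => (hπ (c.1 T)).choose
    have hu : Kmap π _ u = c.1 := funext fun T => (hπ (c.1 T)).choose_spec
    have hker : ∀ T, koszulD Q g F ℓ u T ∈ LinearMap.ker π := by
      intro T
      have h1 : Kmap π _ (koszulD Q g F ℓ u) = 0 := by
        rw [← koszulD_Kmap, hu]
        exact LinearMap.mem_ker.mp c.2
      exact LinearMap.mem_ker.mpr (congrFun h1 T)
    let z₀ : {t : Finset (Fin s) // t.card = ℓ} → ↥(LinearMap.ker π) :=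
      fun T => ⟨koszulD Q g F ℓ u T, hker T⟩
    have hz₀ : Kmap (LinearMap.ker π).subtype _ z₀ = koszulD Q g F ℓ u := rfl
    have hz₀cyc : z₀ ∈ koszulCycles Q g ↥(LinearMap.ker π) ℓ := by
      cases ℓ with
      | zero => exact Submodule.mem_top
      | succ n =>
        refine LinearMap.mem_ker.mpr ?_
        refine Kmap_injective (Submodule.injective_subtype (LinearMap.ker π)) _ _ _ ?_
        rw [← koszulD_Kmap, hz₀, koszulD_koszulD, map_zero]
    refine ⟨⟨z₀, hz₀cyc⟩, ?_⟩
    have hz₀' : koszulD Q g F ℓ u = Kmap (LinearMap.ker π).subtype _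
        ((⟨z₀, hz₀cyc⟩ : ↥(koszulCycles Q g ↥(LinearMap.ker π) ℓ)) : _).1 := hz₀.symm
    have h4 := key ⟨z₀, hz₀cyc⟩ u hz₀' (hcyc _ _ hz₀')
    have h5 : (⟨Kmap π _ u, hcyc _ _ hz₀'⟩ : ↥(koszulCycles Q g M (ℓ + 1))) = c :=
      Subtype.ext hu
    show Φ₀ ⟨z₀, hz₀cyc⟩ = Submodule.Quotient.mk c
    rw [← h4, h5]
  -- kernel
  have hker' : LinearMap.ker Φ =
      (LinearMap.range (koszulD Q g ↥(LinearMap.ker π) ℓ)).comap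
        (koszulCycles Q g ↥(LinearMap.ker π) ℓ).subtype := by
    ext z
    constructor
    · intro hz
      have hz0 : Φ₀ z = 0 := hz
      have h6 : ((⟨Kmap π _ (hexz z).choose, hcyc z _ (hexz z).choose_spec⟩ :
          ↥(koszulCycles Q g M (ℓ + 1)))) ∈
          (LinearMap.range (koszulD Q g M (ℓ + 1))).comap
            (koszulCycles Q g M (ℓ + 1)).subtype := by
        rw [← Submodule.Quotient.mk_eq_zero]
        exact hz0
      obtain ⟨c₂, hc₂⟩ := Submodule.mem_comap.mp h6
      let u₂ : {t : Finset (Fin s) // t.card = ℓ + 1 + 1} → F := fun T => (hπ (c₂ T)).choose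
      have hu₂ : Kmap π _ u₂ = c₂ := funext fun T => (hπ (c₂ T)).choose_spec
      have hw : Kmap π _ ((hexz z).choose - koszulD Q g F (ℓ + 1) u₂) = 0 := by
        rw [map_sub, ← koszulD_Kmap, hu₂, hc₂]
        exact sub_self _
      have hwk : ∀ T, ((hexz z).choose - koszulD Q g F (ℓ + 1) u₂) T ∈ LinearMap.ker π :=
        fun T => LinearMap.mem_ker.mpr (congrFun hw T)
      let v : {t : Finset (Fin s) // t.card = ℓ + 1} → ↥(LinearMap.ker π) :=
        fun T => ⟨((hexz z).choose - koszulD Q g F (ℓ + 1) u₂) T, hwk T⟩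
      have hv : Kmap (LinearMap.ker π).subtype _ v
          = (hexz z).choose - koszulD Q g F (ℓ + 1) u₂ := rfl
      refine Submodule.mem_comap.mpr ⟨v, ?_⟩
      refine Kmap_injective (Submodule.injective_subtype (LinearMap.ker π)) _ _ _ ?_
      rw [← koszulD_Kmap, hv, map_sub, koszulD_koszulD, sub_zero, (hexz z).choose_spec]
      rfl
    · intro hz
      obtain ⟨v, hv⟩ := Submodule.mem_comap.mp hz
      have hu : koszulD Q g F ℓ (Kmap (LinearMap.ker π).subtype _ v)
          = Kmap (LinearMap.ker π).subtype _ z.1 := by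
        rw [koszulD_Kmap, hv]
        rfl
      have h7 := key z _ hu (hcyc _ _ hu)
      have h8 : (⟨Kmap π _ (Kmap (LinearMap.ker π).subtype _ v), hcyc _ _ hu⟩ :
          ↥(koszulCycles Q g M (ℓ + 1))) = 0 := by
        refine Subtype.ext ?_
        funext T
        exact (v T).2
      show Φ₀ z = 0
      rw [← h7, h8, Submodule.Quotient.mk_zero]
  -- assemble
  refine ⟨?_⟩
  have e1 := Submodule.quotEquivOfEq _ _ hker'.symm
  have e2 := Φ.quotKerEquivOfSurjective hsurj
  exact e2.symm ≪≫ₗ e1.symm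

end Shift

section Base
variable {Q : Type*} [CommRing Q] {s : ℕ} {g : Fin s → Q}
  {M : Type*} [AddCommGroup M] [Module Q M]

lemma H0_iso :
    Nonempty ((KoszulHomology Q g M 0) ≃ₗ[Q]
      (M ⧸ (Ideal.span (Set.range g) • ⊤ : Submodule Q M))) := by
  classical
  let T₀ : {t : Finset (Fin s) // t.card = 0} := ⟨∅, Finset.card_empty⟩
  let ev : ({t : Finset (Fin s) // t.card = 0} → M) →ₗ[Q] M := LinearMap.proj T₀
  let χ : ↥(koszulCycles Q g M 0) →ₗ[Q]
      M ⧸ (Ideal.span (Set.range g) • ⊤ : Submodule Q M) :=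
    (Ideal.span (Set.range g) • ⊤ : Submodule Q M).mkQ ∘ₗ ev ∘ₗ
      (koszulCycles Q g M 0).subtype
  have hχ : ∀ z : ↥(koszulCycles Q g M 0), χ z = Submodule.Quotient.mk (z.1 T₀) :=
    fun z => rfl
  have hTall : ∀ T : {t : Finset (Fin s) // t.card = 0}, T = T₀ := by
    intro T
    exact Subtype.ext (Finset.card_eq_zero.mp T.2)
  have hsurj : Function.Surjective χ := by
    intro x
    obtain ⟨m, rfl⟩ := Submodule.Quotient.mk_surjective _ x
    refine ⟨⟨fun _ => m, Submodule.mem_top⟩, ?_⟩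
    rw [hχ]
  have hker : LinearMap.ker χ =
      (LinearMap.range (koszulD Q g M 0)).comap (koszulCycles Q g M 0).subtype := by
    ext z
    rw [LinearMap.mem_ker, hχ, Submodule.Quotient.mk_eq_zero]
    constructor
    · intro h1
      obtain ⟨u, hu⟩ := koszulD_zero_range g z.1 (fun T => by rw [hTall T]; exact h1)
      exact Submodule.mem_comap.mpr ⟨u, hu⟩
    · intro hz
      obtain ⟨u, hu⟩ := Submodule.mem_comap.mp hz
      have h2 : koszulD Q g M 0 u T₀ ∈ (Ideal.span (Set.range g) • ⊤ : Submodule Q M) :=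
        koszulD_zero_mem g u T₀
      rw [hu] at h2
      exact h2
  refine ⟨?_⟩
  have e1 := Submodule.quotEquivOfEq _ _ hker.symm
  have e2 := χ.quotKerEquivOfSurjective hsurj
  exact e1 ≪≫ₗ e2

lemma quot_smul_iso {F : Type*} [AddCommGroup F] [Module Q F]
    (aug : F →ₗ[Q] M) (haug : Function.Surjective aug)
    (hker : LinearMap.ker aug ≤ Ideal.span (Set.range g) • ⊤) :
    Nonempty ((M ⧸ (Ideal.span (Set.range g) • ⊤ : Submodule Q M)) ≃ₗ[Q]
      (F ⧸ (Ideal.span (Set.range g) • ⊤ : Submodule Q F))) := by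
  let χ : F →ₗ[Q] M ⧸ (Ideal.span (Set.range g) • ⊤ : Submodule Q M) :=
    (Ideal.span (Set.range g) • ⊤ : Submodule Q M).mkQ ∘ₗ aug
  have hχ : ∀ x : F, χ x = Submodule.Quotient.mk (aug x) := fun x => rfl
  have hsurj : Function.Surjective χ := by
    intro x
    obtain ⟨m, rfl⟩ := Submodule.Quotient.mk_surjective _ x
    obtain ⟨y, rfl⟩ := haug m
    exact ⟨y, hχ y⟩
  have hmap : Submodule.map aug (Ideal.span (Set.range g) • ⊤ : Submodule Q F)
      = (Ideal.span (Set.range g) • ⊤ : Submodule Q M) := by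
    rw [Submodule.map_smul'', Submodule.map_top, LinearMap.range_eq_top.mpr haug]
  have hkerχ : LinearMap.ker χ = (Ideal.span (Set.range g) • ⊤ : Submodule Q F) := by
    ext x
    rw [LinearMap.mem_ker, hχ, Submodule.Quotient.mk_eq_zero]
    constructor
    · intro h1
      rw [← hmap] at h1
      obtain ⟨y, hy, hyx⟩ := Submodule.mem_map.mp h1
      have h2 : x - y ∈ LinearMap.ker aug := by
        rw [LinearMap.mem_ker, map_sub, hyx, sub_self]
      have h3 := hker h2
      have h4 := Submodule.add_mem _ h3 hy
      simpa using h4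
    · intro hx
      rw [← hmap]
      exact Submodule.mem_map.mpr ⟨x, hx, rfl⟩
  refine ⟨?_⟩
  have e1 := Submodule.quotEquivOfEq _ _ hkerχ.symm
  have e2 := χ.quotKerEquivOfSurjective hsurj
  exact (e1 ≪≫ₗ e2).symm
end Base

open scoped TensorProduct

theorem koszul_aux {Q : Type u} [CommRing Q] {s : ℕ} (g : Fin s → Q) (hwr : WRseq Q g) :
    ∀ (ℓ : ℕ) (M : Type u) [AddCommGroup M] [Module Q M] (b : ℕ → ℕ)
      (d : ∀ i : ℕ, (Fin (b (i + 1)) → Q) →ₗ[Q] (Fin (b i) → Q))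
      (aug : (Fin (b 0) → Q) →ₗ[Q] M), Function.Surjective aug →
      LinearMap.ker aug = LinearMap.range (d 0) →
      (∀ i, LinearMap.ker (d i) = LinearMap.range (d (i + 1))) →
      (∀ i, LinearMap.range (d i) ≤ (Ideal.span (Set.range g)) • ⊤) →
      Nonempty ((KoszulHomology Q g M ℓ) ≃ₗ[Q]
        ((Fin (b ℓ) → Q) ⊗[Q] (Q ⧸ Ideal.span (Set.range g)))) := by
  intro ℓ
  induction ℓ with
  | zero =>
    intro M _ _ b d aug haug hex0 _ hwci
    obtain ⟨e1⟩ := (H0_iso (g := g) (M := M))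
    obtain ⟨e2⟩ := quot_smul_iso aug haug (by rw [hex0]; exact hwci 0)
    have e3 := (TensorProduct.tensorQuotEquivQuotSMul (Fin (b 0) → Q)
      (Ideal.span (Set.range g))).symm
    exact ⟨e1 ≪≫ₗ e2 ≪≫ₗ e3⟩
  | succ m IH =>
    intro M _ _ b d aug haug hex0 hex hwci
    obtain ⟨esh⟩ := shift_iso (g := g) aug haug (by rw [hex0]; exact hwci 0)
      (wrseq_pi hwr) m
    obtain ⟨e'⟩ := IH ↥(LinearMap.ker aug) (fun i => b (i + 1)) (fun i => d (i + 1))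
      (LinearMap.codRestrict (LinearMap.ker aug) (d 0)
        (fun x => by rw [hex0]; exact ⟨x, rfl⟩))
      (by
        rintro ⟨y, hy⟩
        rw [hex0] at hy
        obtain ⟨x, hx⟩ := hy
        exact ⟨x, Subtype.ext hx⟩)
      (by rw [LinearMap.ker_codRestrict]; exact hex 0)
      (fun i => hex (i + 1))
      (fun i => hwci (i + 1))
    exact ⟨esh ≪≫ₗ e'⟩

/-- If `M` is a `g`-weak complete intersection module over the Noetherian local ring `Q`
(witnessed by a minimal free resolution `F` whose differentials land in `(g)F`), then
`H_ℓ(g;M) ≅ F_ℓ ⊗_Q Q/(g)` for every `ℓ`. -/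
theorem koszulHomology_iso_resolution_tensor
    {Q : Type*} [CommRing Q] [IsNoetherianRing Q] [IsLocalRing Q]
    {s : ℕ} (g : Fin s → Q)
    (hreg : RingTheory.Sequence.IsRegular Q (List.ofFn g))
    (M : Type*) [AddCommGroup M] [Module Q M] [Module.Finite Q M]
    (b : ℕ → ℕ) (d : ∀ i : ℕ, (Fin (b (i + 1)) → Q) →ₗ[Q] (Fin (b i) → Q))
    (aug : (Fin (b 0) → Q) →ₗ[Q] M)
    (haug : Function.Surjective aug)
    (hex0 : LinearMap.ker aug = LinearMap.range (d 0))
    (hex : ∀ i, LinearMap.ker (d i) = LinearMap.range (d (i + 1)))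
    (hmin : ∀ i, LinearMap.range (d i) ≤ (IsLocalRing.maximalIdeal Q) • ⊤)
    (hwci : ∀ i, LinearMap.range (d i) ≤ (Ideal.span (Set.range g)) • ⊤)
    (ℓ : ℕ) :
    Nonempty ((KoszulHomology Q g M ℓ) ≃ₗ[Q]
      ((Fin (b ℓ) → Q) ⊗[Q] (Q ⧸ Ideal.span (Set.range g)))) := by
  have hwr : WRseq Q g := wrseq_of_isWeaklyRegular hreg.toIsWeaklyRegular
  cases ℓ with
  | zero =>
    obtain ⟨e1⟩ := (H0_iso (g := g) (M := M))
    obtain ⟨e2⟩ := quot_smul_iso aug haug (by rw [hex0]; exact hwci 0)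
    have e3 := (TensorProduct.tensorQuotEquivQuotSMul (Fin (b 0) → Q)
      (Ideal.span (Set.range g))).symm
    exact ⟨e1 ≪≫ₗ e2 ≪≫ₗ e3⟩
  | succ m =>
    obtain ⟨esh⟩ := shift_iso (g := g) aug haug (by rw [hex0]; exact hwci 0)
      (wrseq_pi hwr) m
    obtain ⟨e'⟩ := koszul_aux g hwr m ↥(LinearMap.ker aug)
      (fun i => b (i + 1)) (fun i => d (i + 1))
      (LinearMap.codRestrict (LinearMap.ker aug) (d 0)
        (fun x => by rw [hex0]; exact ⟨x, rfl⟩))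
      (by
        rintro ⟨y, hy⟩
        rw [hex0] at hy
        obtain ⟨x, hx⟩ := hy
        exact ⟨x, Subtype.ext hx⟩)
      (by rw [LinearMap.ker_codRestrict]; exact hex 0)
      (fun i => hex (i + 1))
      (fun i => hwci (i + 1))
    exact ⟨esh ≪≫ₗ e'⟩
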